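/- Let h ≥ 1, L ≥ 1, P ≥ 2 be integers and set N = min(L, ⌊L(P−1)/h⌋). For every real multivariate polynomial f in h variables of total degree at most N, there exist real (P−1)×h matrices W_1, …, W_L and real coefficients T_μ indexed by μ = (μ_1,…,μ_L) ∈ {1,…,P}^L such that for all v ∈ ℝ^h, f(v) = Σ_μ T_μ · Π_{l=1}^{L} u_l(μ_l, v), where u_l(1, v) = 1 and u_l(j, v) = (W_l v)_{j−1} for 2 ≤ j ≤ P. -/

import Mathlib

open scoped BigOperators

/-- The entry `u_l(j, v)` of the tensorized state propagation: `u_l(1,v) = 1`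
(index `j = 0` here, 0-based) and `u_l(j, v) = (W_l v)_{j-1}` for the other indices. -/
noncomputable def uEnt {P h : ℕ} (W : Matrix (Fin (P - 1)) (Fin h) ℝ)
    (j : Fin P) (v : Fin h → ℝ) : ℝ :=
  if hj : (j : ℕ) = 0 then 1
  else W.mulVec v ⟨(j : ℕ) - 1, by have := j.isLt; omega⟩

noncomputable def Wstd (h L P : ℕ) (l : Fin L) : Matrix (Fin (P - 1)) (Fin h) ℝ :=
  Matrix.of fun r i =>
    if (i : ℕ) = ((l : ℕ) * (P - 1) + (r : ℕ)) % max h (P - 1) % h then 1 else 0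

lemma Wstd_mulVec (h L P : ℕ) (hh : 1 ≤ h) (l : Fin L) (v : Fin h → ℝ) (r : Fin (P - 1)) :
    (Wstd h L P l).mulVec v r
      = v ⟨((l : ℕ) * (P - 1) + (r : ℕ)) % max h (P - 1) % h, Nat.mod_lt _ hh⟩ := by
  classical
  set c : ℕ := ((l : ℕ) * (P - 1) + (r : ℕ)) % max h (P - 1) % h with hc
  have hch : c < h := Nat.mod_lt _ hh
  have : ∀ i : Fin h, ((i : ℕ) = c) ↔ (i = ⟨c, hch⟩) := fun i => by
    constructor <;> intro hi <;> simp_all [Fin.ext_iff]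
  simp only [Matrix.mulVec, dotProduct, Wstd, Matrix.of_apply, ← hc, this,
    ite_mul, one_mul, zero_mul]
  simp

lemma key_assign (h L P : ℕ) (hh : 1 ≤ h) (hP : 2 ≤ P) (cs : List (Fin h))
    (hsort : cs.Pairwise (· ≤ ·)) (hlen : cs.length ≤ L)
    (hlen2 : h * cs.length ≤ L * (P - 1)) :
    ∃ μ : Fin L → Fin P, ∀ v : Fin h → ℝ,
      ∏ l, uEnt (Wstd h L P l) (μ l) v = (cs.map v).prod := by
  classical
  set M := max h (P - 1) with hM
  set d := cs.length with hd
  have hP1 : 1 ≤ P - 1 := by omega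
  have hhM : h ≤ M := le_max_left _ _
  have hPM : P - 1 ≤ M := le_max_right _ _
  set t : Fin d → ℕ := fun k => (cs.get k : ℕ) + M * (k : ℕ) with ht
  have hMd : M * d ≤ L * (P - 1) := by
    rcases max_choice h (P - 1) with hmx | hmx
    · rw [hM, hmx]; exact hlen2
    · rw [hM, hmx]; calc (P-1) * d ≤ (P-1) * L := Nat.mul_le_mul_left _ hlen
        _ = L * (P-1) := Nat.mul_comm _ _
  have ht_lt : ∀ k : Fin d, t k < L * (P - 1) := by
    intro k
    have h1 : (cs.get k : ℕ) < h := (cs.get k).isLt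
    have h2 : M * ((k : ℕ) + 1) ≤ M * d := Nat.mul_le_mul_left _ (by omega)
    have : t k < M * ((k : ℕ) + 1) := by
      simp only [ht]; rw [Nat.mul_add, Nat.mul_one]; omega
    omega
  have hs_lt : ∀ k : Fin d, t k / (P - 1) < L := by
    intro k
    rw [Nat.div_lt_iff_lt_mul (by omega)]
    calc t k < L * (P-1) := ht_lt k
      _ = L * (P-1) := rfl
  set S : Fin d → Fin L := fun k => ⟨t k / (P - 1), hs_lt k⟩ with hS
  have hmono : ∀ k k' : Fin d, k < k' → t k + M ≤ t k' := by
    intro k k' hkk'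
    have hc : (cs.get k : ℕ) ≤ (cs.get k' : ℕ) := by
      have := List.Pairwise.rel_get_of_lt hsort hkk'
      exact_mod_cast this
    have h2 : M * ((k : ℕ) + 1) ≤ M * (k' : ℕ) := Nat.mul_le_mul_left _ (by
      have : (k : ℕ) < (k' : ℕ) := hkk'
      omega)
    simp only [ht]
    rw [Nat.mul_add, Nat.mul_one] at h2
    omega
  have hSmono : ∀ k k' : Fin d, k < k' → (S k : ℕ) < (S k' : ℕ) := by
    intro k k' hkk'
    have h1 := hmono k k' hkk'
    have h2 : t k + (P - 1) ≤ t k' := by omega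
    have h3 : (t k + (P - 1)) / (P - 1) ≤ t k' / (P - 1) := Nat.div_le_div_right h2
    rw [Nat.add_div_right _ (by omega)] at h3
    simp only [hS]
    omega
  have hSinj : Function.Injective S := by
    intro k k' hkk'
    by_contra hne
    rcases Ne.lt_or_gt hne with hlt | hlt
    · exact absurd (congrArg Fin.val hkk') (Nat.ne_of_lt (hSmono _ _ hlt))
    · exact absurd (congrArg Fin.val hkk').symm (Nat.ne_of_lt (hSmono _ _ hlt))
  set rr : Fin d → ℕ := fun k => t k % (P - 1) with hrr
  have hrlt : ∀ k, rr k < P - 1 := fun k => Nat.mod_lt _ (by omega)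
  set μ : Fin L → Fin P := fun l =>
    if hk : ∃ k : Fin d, S k = l then ⟨rr (Classical.choose hk) + 1, by
        have := hrlt (Classical.choose hk); omega⟩
    else ⟨0, by omega⟩ with hμ
  refine ⟨μ, fun v => ?_⟩
  have hone : ∀ l : Fin L, (¬ ∃ k, S k = l) → uEnt (Wstd h L P l) (μ l) v = 1 := by
    intro l hl
    simp only [hμ, dif_neg hl, uEnt]
    simp
  have hval : ∀ k : Fin d, uEnt (Wstd h L P (S k)) (μ (S k)) v = v (cs.get k) := by
    intro k
    have hex : ∃ k' : Fin d, S k' = S k := ⟨k, rfl⟩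
    have hck : Classical.choose hex = k := hSinj (Classical.choose_spec hex)
    simp only [hμ, dif_pos hex, hck, uEnt]
    rw [dif_neg (by simp)]
    have hidx : (⟨rr k + 1 - 1, by have := hrlt k; omega⟩ : Fin (P - 1)) = ⟨rr k, hrlt k⟩ := by
      simp
    rw [Wstd_mulVec h L P hh (S k) v ⟨rr k + 1 - 1, by have := hrlt k; omega⟩]
    congr 1
    have harith : ((S k : ℕ)) * (P - 1) + (rr k + 1 - 1) = t k := by
      show (t k / (P - 1)) * (P - 1) + (t k % (P - 1) + 1 - 1) = t k
      rw [Nat.add_sub_cancel]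
      rw [Nat.mul_comm]; exact Nat.div_add_mod _ _
    apply Fin.ext
    simp only [harith]
    have h1 : (cs.get k : ℕ) < h := (cs.get k).isLt
    have h2 : t k % M = (cs.get k : ℕ) := by
      simp only [ht]
      rw [Nat.add_mul_mod_self_left]
      exact Nat.mod_eq_of_lt (by omega)
    rw [h2, Nat.mod_eq_of_lt (by omega)]
  calc ∏ l, uEnt (Wstd h L P l) (μ l) v
      = ∏ l ∈ Finset.univ.image S, uEnt (Wstd h L P l) (μ l) v := by
        refine (Finset.prod_subset (Finset.subset_univ _) ?_).symm
        intro l _ hl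
        refine hone l ?_
        intro ⟨k, hk⟩
        exact hl (Finset.mem_image.mpr ⟨k, Finset.mem_univ _, hk⟩)
    _ = ∏ k : Fin d, uEnt (Wstd h L P (S k)) (μ (S k)) v :=
        Finset.prod_image (fun k _ k' _ hkk' => hSinj hkk')
    _ = ∏ k : Fin d, v (cs.get k) := Finset.prod_congr rfl (fun k _ => hval k)
    _ = (cs.map v).prod := by
        rw [← Fin.prod_univ_fun_getElem cs v]
        rfl

lemma prod_toMultiset_map {h : ℕ} (m : Fin h →₀ ℕ) (v : Fin h → ℝ) :
    ((Finsupp.toMultiset m).map v).prod = m.prod fun i n => v i ^ n := by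
  classical
  induction m using Finsupp.induction with
  | zero => simp
  | single_add a n f ha hn ih =>
    rw [Finsupp.toMultiset_add, Multiset.map_add, Multiset.prod_add, ih,
      Finsupp.toMultiset_single,
      Finsupp.prod_add_index' (fun _ => pow_zero _) (fun _ _ _ => pow_add _ _ _)]
    congr 1
    rw [Finsupp.prod_single_index (h := fun x k => v x ^ k) (pow_zero (v a)),
      Multiset.map_nsmul, Multiset.map_singleton, Multiset.prod_nsmul,
      Multiset.prod_singleton]

theorem tensorized_covers_polynomials
    (h L P : ℕ) (hh : 1 ≤ h) (hL : 1 ≤ L) (hP : 2 ≤ P)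
    (f : MvPolynomial (Fin h) ℝ)
    (hdeg : f.totalDegree ≤ min L (L * (P - 1) / h)) :
    ∃ (W : Fin L → Matrix (Fin (P - 1)) (Fin h) ℝ) (T : (Fin L → Fin P) → ℝ),
      ∀ v : Fin h → ℝ,
        MvPolynomial.eval v f = ∑ μ : Fin L → Fin P, T μ * ∏ l, uEnt (W l) (μ l) v := by
  classical
  refine ⟨Wstd h L P, ?_⟩
  have key' : ∀ m : (Fin h →₀ ℕ), ∃ μ : Fin L → Fin P, m ∈ f.support →
      ∀ v : Fin h → ℝ,
        ∏ l, uEnt (Wstd h L P l) (μ l) v = m.prod fun i n => v i ^ n := by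
    intro m
    by_cases hm : m ∈ f.support
    · have hdegm : (m.sum fun _ e => e) ≤ min L (L * (P - 1) / h) :=
        le_trans (MvPolynomial.le_totalDegree hm) hdeg
      set cs : List (Fin h) := m.toMultiset.sort (· ≤ ·) with hcs
      have hlen : cs.length = m.sum fun _ e => e := by
        rw [hcs]
        rw [Multiset.length_sort]
        exact Finsupp.card_toMultiset m
      have hlenL : cs.length ≤ L := by
        rw [hlen]; exact le_trans hdegm (min_le_left _ _)
      have hlenH : h * cs.length ≤ L * (P - 1) := by
        have h1 : cs.length ≤ L * (P - 1) / h := by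
          rw [hlen]; exact le_trans hdegm (min_le_right _ _)
        have h2 := (Nat.le_div_iff_mul_le hh).mp h1
        calc h * cs.length = cs.length * h := Nat.mul_comm _ _
          _ ≤ L * (P - 1) := h2
      obtain ⟨μ, hμ⟩ := key_assign h L P hh hP cs (Multiset.pairwise_sort _ _) hlenL hlenH
      refine ⟨μ, fun _ v => ?_⟩
      rw [hμ v, ← prod_toMultiset_map m v]
      have hcoe : ((cs.map v : List ℝ) : Multiset ℝ) = (Finsupp.toMultiset m).map v := by
        rw [← Multiset.map_coe]
        congr 1
        exact Multiset.sort_eq _ _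
      calc (cs.map v).prod = (((cs.map v : List ℝ) : Multiset ℝ)).prod := rfl
        _ = ((Finsupp.toMultiset m).map v).prod := by rw [hcoe]
    · exact ⟨fun _ => ⟨0, by omega⟩, fun hm' => absurd hm' hm⟩
  choose μOf hμOf using key'
  refine ⟨fun μ => ∑ m ∈ f.support, if μOf m = μ then MvPolynomial.coeff m f else 0,
    fun v => ?_⟩
  have step1 : ∀ μ : Fin L → Fin P,
      (∑ m ∈ f.support, if μOf m = μ then MvPolynomial.coeff m f else 0) *
          ∏ l, uEnt (Wstd h L P l) (μ l) v
        = ∑ m ∈ f.support,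
            if μOf m = μ then MvPolynomial.coeff m f * ∏ l, uEnt (Wstd h L P l) (μ l) v
            else 0 := by
    intro μ
    rw [Finset.sum_mul]
    refine Finset.sum_congr rfl fun m _ => ?_
    by_cases hc : μOf m = μ <;> simp [hc]
  calc MvPolynomial.eval v f
      = ∑ m ∈ f.support, MvPolynomial.coeff m f * ∏ i ∈ m.support, v i ^ m i :=
        MvPolynomial.eval_eq v f
    _ = ∑ m ∈ f.support,
          MvPolynomial.coeff m f * ∏ l, uEnt (Wstd h L P l) (μOf m l) v := by
        refine Finset.sum_congr rfl fun m hm => ?_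
        rw [hμOf m hm v]
        rfl
    _ = ∑ m ∈ f.support, ∑ μ : Fin L → Fin P,
          if μOf m = μ then MvPolynomial.coeff m f * ∏ l, uEnt (Wstd h L P l) (μ l) v
          else 0 := by
        refine Finset.sum_congr rfl fun m _ => ?_
        rw [Finset.sum_ite_eq Finset.univ (μOf m)
          (fun μ => MvPolynomial.coeff m f * ∏ l, uEnt (Wstd h L P l) (μ l) v)]
        simp
    _ = ∑ μ : Fin L → Fin P, ∑ m ∈ f.support,
          if μOf m = μ then MvPolynomial.coeff m f * ∏ l, uEnt (Wstd h L P l) (μ l) v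
          else 0 := Finset.sum_comm
    _ = ∑ μ : Fin L → Fin P,
          (∑ m ∈ f.support, if μOf m = μ then MvPolynomial.coeff m f else 0) *
            ∏ l, uEnt (Wstd h L P l) (μ l) v :=
        (Finset.sum_congr rfl fun μ _ => (step1 μ).symm)
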